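/- arXiv:1711.00929 — 2 statements merged into one kernel-verified Lean document; each statement's English description precedes it below -/
import Mathlib

section
/- If a curvature tensor is both projectively flat (Θ_{i j̄ k l̄} = (1/n) Θ^{(1)}_{k l̄} h_{i j̄}) and satisfies Θ^{(1)} = Θ^{(3)} (first Ricci equals third Ricci), and n ≥ 2, then Θ^{(1)} = 0 and Θ^{(3)} = 0, and consequently Θ = 0. -/
open Finset
open scoped ComplexOrder

/-- A projectively flat tensor whose first and third Ricci tensors
agree must be flat: `Θ^{(1)} = Θ^{(3)} = 0` and `Θ = 0` (for `n ≥ 2`). -/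
theorem projectively_flat_with_first_eq_third_ricci_is_flat
    {n : ℕ} (hn : 2 ≤ n)
    (h hinv : Matrix (Fin n) (Fin n) ℂ)
    (hpos : h.PosDef)
    (hinverse : ∀ k i, (∑ j, hinv k j * h i j) = if k = i then 1 else 0)
    (Θ : Fin n → Fin n → Fin n → Fin n → ℂ)
    (Ric1 : Fin n → Fin n → ℂ)
    (hRic1 : ∀ k l, Ric1 k l = ∑ i, ∑ j, hinv i j * Θ i j k l)
    (Ric3 : Fin n → Fin n → ℂ)
    (hRic3 : ∀ i l, Ric3 i l = ∑ k, ∑ j, hinv k j * Θ i j k l)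
    (hpf : ∀ i j k l, Θ i j k l = (1 / (n : ℂ)) * Ric1 k l * h i j)
    (heq : ∀ a b, Ric1 a b = Ric3 a b) :
    (∀ a b, Ric1 a b = 0) ∧ (∀ a b, Ric3 a b = 0) ∧
      (∀ i j k l, Θ i j k l = 0) := by
  have hn0 : (n:ℂ) ≠ 0 := Nat.cast_ne_zero.mpr (by omega)
  have key : ∀ a b, Ric1 a b = (1 / (n : ℂ)) * Ric1 a b := by
    intro a b
    have step : ∀ k : Fin n, (∑ j, hinv k j * Θ a j k b)
        = (1 / (n : ℂ)) * Ric1 k b * (if k = a then 1 else 0) := by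
      intro k
      rw [← hinverse, Finset.mul_sum]
      exact Finset.sum_congr rfl fun j _ => by rw [hpf]; ring
    calc Ric1 a b = ∑ k, ∑ j, hinv k j * Θ a j k b := (heq a b).trans (hRic3 a b)
      _ = ∑ k, (1 / (n : ℂ)) * Ric1 k b * (if k = a then 1 else 0) :=
          Finset.sum_congr rfl fun k _ => step k
      _ = (1 / (n : ℂ)) * Ric1 a b := by
          simp [mul_ite, Finset.sum_ite_eq']
  have hR1 : ∀ a b, Ric1 a b = 0 := by
    intro a b
    have h1 : (1 - 1 / (n : ℂ)) * Ric1 a b = 0 := by linear_combination key a b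
    have h2 : (1 - 1 / (n : ℂ)) ≠ 0 := by
      intro hc
      have hc' : (n:ℂ) - 1 = 0 := by field_simp at hc; linear_combination hc
      have : (n:ℂ) = 1 := by linear_combination hc'
      have : n = 1 := by exact_mod_cast this
      omega
    exact (mul_eq_zero.mp h1).resolve_left h2
  refine ⟨hR1, fun a b => (heq a b).symm.trans (hR1 a b), fun i j k l => by
    rw [hpf, hR1]; ring⟩
end

section
/- If h is simultaneously Kähler (∂h_{i j̄}/∂z^k = ∂h_{k j̄}/∂z^i for all indices) and projectively flat on an open subset of ℂⁿ with n ≥ 2, then the curvature symmetry Θ_{i j̄ k l̄} = Θ_{k j̄ i l̄} forces (1/n) ρ_{k l̄} h_{i j̄} = (1/n) ρ_{i l̄} h_{k j̄} for all indices, and for n ≥ 2 this implies ρ = λ h for a function λ and then, contracting suitably, Θ_{i j̄ k l̄} = (λ/n)·h h, which combined with the Kähler Bianchi symmetry Θ_{i j̄ k l̄} = Θ_{i l̄ k j̄} yields λ·(h_{i j̄} h_{k l̄} − h_{i l̄} h_{k j̄}) = 0 and hence, for n ≥ 2, λ = 0 and Θ = 0. That is: a Kähler projectively flat metric is Chern flat.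 -/
open Finset
open scoped ComplexOrder

/-- (Algebraic core of: a Kähler projectively flat metric is
Chern flat.) If the tensor `Θ_{ij̄kl̄} = (1/n) ρ_{kl̄} h_{ij̄}` satisfies the two
Kähler curvature symmetries `Θ_{ij̄kl̄} = Θ_{kj̄il̄}` and `Θ_{ij̄kl̄} = Θ_{il̄kj̄}`
with `n ≥ 2` and `h` positive definite, then `ρ = 0` and `Θ = 0`. -/
theorem kahler_projectively_flat_is_chern_flat
    {n : ℕ} (hn : 2 ≤ n)
    (h ρ : Matrix (Fin n) (Fin n) ℂ)
    (hpos : h.PosDef)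
    (Θ : Fin n → Fin n → Fin n → Fin n → ℂ)
    (hΘ : ∀ i j k l, Θ i j k l = (1 / (n : ℂ)) * ρ k l * h i j)
    (hsym1 : ∀ i j k l, Θ i j k l = Θ k j i l)
    (hsym2 : ∀ i j k l, Θ i j k l = Θ i l k j) :
    ρ = 0 ∧ ∀ i j k l, Θ i j k l = 0 := by
  have hn0 : (n : ℂ) ≠ 0 := by
    have : (0:ℕ) < n := by omega
    exact_mod_cast this.ne'
  have hρ : ρ = 0 := by
    by_contra hne
    obtain ⟨k, l, hkl⟩ : ∃ k l, ρ k l ≠ 0 := by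
      by_contra hc
      push_neg at hc
      exact hne (by ext k l; simpa using hc k l)
    have key : ∀ i j, h i j = (ρ k j / ρ k l) * h i l := by
      intro i j
      have e := hsym2 i j k l
      rw [hΘ, hΘ] at e
      field_simp at e ⊢
      linear_combination e
    obtain ⟨j, hj⟩ : ∃ j : Fin n, j ≠ l := by
      haveI : Nontrivial (Fin n) := Fin.nontrivial_iff_two_le.mpr hn
      exact exists_ne l
    set c : ℂ := ρ k j / ρ k l with hc
    set x : Fin n → ℂ := fun m => if m = j then 1 else if m = l then -c else 0 with hx
    have hxne : x ≠ 0 := by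
      intro h0
      have := congrFun h0 j
      simp [hx] at this
    have hmv : Matrix.mulVec h x = 0 := by
      funext i
      have : Matrix.mulVec h x i = h i j * 1 + h i l * (-c) := by
        have hterm : ∀ m, h i m * x m =
            (if m = j then h i j * 1 else 0) + (if m = l then h i l * -c else 0) := by
          intro m
          by_cases h1 : m = j <;> by_cases h2 : m = l
          · exact absurd (h1 ▸ h2) hj
          · subst h1; simp [hx, h2]
          · subst h2; simp [hx, h1]
          · simp [hx, h1, h2]
        simp only [Matrix.mulVec, dotProduct]
        rw [Finset.sum_congr rfl (fun m _ => hterm m), Finset.sum_add_distrib,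
            Finset.sum_ite_eq' Finset.univ j, Finset.sum_ite_eq' Finset.univ l]
        simp
      rw [this, key i j]
      ring_nf
      rw [hc, Pi.zero_apply]; ring
    have hpos' := hpos.dotProduct_mulVec_pos hxne
    rw [hmv] at hpos'
    simp at hpos'
  refine ⟨hρ, fun i j k l => ?_⟩
  rw [hΘ, hρ]
  simp
end
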